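/- Let δ ≥ 0 and k ≥ 1 be integers, let n₁, …, n_k ≥ 0 be integers with m_l = n_l + δ for each l, and suppose the complex coefficients a₁, …, a_k all lie in a common (closed) quarter-plane: there exist θ₀ ∈ ℝ, reals r_l ≥ 0, and angles θ_l ∈ [0, π/2] such that a_l = r_l·e^{i(θ₀+θ_l)} for each l. Then for every integer α ≥ δ: |Σ_{l=1}^{k} a_l/(α+m_l+1)|² ≥ ((α−δ+1)/(α+δ+1)) · |Σ_{l=1}^{k} a_l/(α+n_l+1)|². (Theorem: if φ(z) = a₁z^{m₁}z̄^{n₁} + … + a_kz^{m_k}z̄^{n_k} with m₁−n₁ = … = m_k−n_k = δ ≥ 0 and max_{l,l'} |arg(a_l) − arg(a_{l'})| ≤ π/2, then the Toeplitz operator T_φ on the Bergman space is hyponormal.) -/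

import Mathlib

set_option maxHeartbeats 1000000 in
/-- A polynomial of fixed relative degree `δ` whose coefficients all lie in a common
closed quarter-plane (`a_l = r_l·e^{i(θ₀+θ_l)}` with `r_l ≥ 0`, `θ_l ∈ [0, π/2]`)
yields a hyponormal Toeplitz operator on the Bergman space; via the Liu–Lu criterion
this is the displayed inequality. -/
theorem quarter_plane_polynomial_hyponormal (δ k : ℕ) (hk : 1 ≤ k)
    (n m : Fin k → ℕ) (hm : ∀ l : Fin k, m l = n l + δ)
    (a : Fin k → ℂ) (θ₀ : ℝ) (r : Fin k → ℝ) (θ : Fin k → ℝ)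
    (hr : ∀ l : Fin k, 0 ≤ r l)
    (hθ : ∀ l : Fin k, θ l ∈ Set.Icc (0 : ℝ) (Real.pi / 2))
    (ha : ∀ l : Fin k, a l = (r l : ℂ) * Complex.exp (((θ₀ + θ l : ℝ) : ℂ) * Complex.I))
    (α : ℕ) (hα : δ ≤ α) :
    ‖∑ l : Fin k, a l / ((α : ℂ) + m l + 1)‖ ^ 2
      ≥ (((α : ℝ) - δ + 1) / ((α : ℝ) + δ + 1))
        * ‖∑ l : Fin k, a l / ((α : ℂ) + n l + 1)‖ ^ 2 := by
  set X : Fin k → ℝ := fun l => r l * Real.cos (θ l) with hXdef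
  set Y : Fin k → ℝ := fun l => r l * Real.sin (θ l) with hYdef
  have hX0 : ∀ l, 0 ≤ X l := by
    intro l
    refine mul_nonneg (hr l) (Real.cos_nonneg_of_mem_Icc ?_)
    obtain ⟨h1, h2⟩ := hθ l
    constructor <;> nlinarith [Real.pi_pos]
  have hY0 : ∀ l, 0 ≤ Y l := by
    intro l
    refine mul_nonneg (hr l) (Real.sin_nonneg_of_nonneg_of_le_pi (hθ l).1 ?_)
    nlinarith [(hθ l).2, Real.pi_pos]
  have key : ∀ g : Fin k → ℕ,
      (∑ l : Fin k, a l / ((α : ℂ) + g l + 1))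
        = Complex.exp ((θ₀ : ℂ) * Complex.I)
          * (((∑ l : Fin k, X l / ((α : ℝ) + g l + 1) : ℝ) : ℂ)
             + ((∑ l : Fin k, Y l / ((α : ℝ) + g l + 1) : ℝ) : ℂ) * Complex.I) := by
    intro g
    have hterm : ∀ l : Fin k, a l / ((α : ℂ) + g l + 1)
        = Complex.exp ((θ₀ : ℂ) * Complex.I)
          * (((X l / ((α : ℝ) + g l + 1) : ℝ) : ℂ)
             + ((Y l / ((α : ℝ) + g l + 1) : ℝ) : ℂ) * Complex.I) := by
      intro l
      have hdr : ((α : ℝ) + g l + 1) ≠ 0 := by positivity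
      have e1 : (((X l / ((α : ℝ) + g l + 1) : ℝ)) : ℂ)
            + (((Y l / ((α : ℝ) + g l + 1) : ℝ)) : ℂ) * Complex.I
          = (r l : ℂ) * Complex.exp ((θ l : ℂ) * Complex.I)
              / (((α : ℝ) + g l + 1 : ℝ) : ℂ) := by
        rw [Complex.exp_mul_I, ← Complex.ofReal_cos, ← Complex.ofReal_sin]
        simp only [hXdef, hYdef]
        push_cast
        field_simp
      have hcast : ((α : ℂ) + g l + 1) = (((α : ℝ) + g l + 1 : ℝ) : ℂ) := by
        push_cast; ring
      rw [ha l, hcast, Complex.ofReal_add, add_mul, Complex.exp_add, e1]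
      ring
    rw [Finset.sum_congr rfl (fun l _ => hterm l), ← Finset.mul_sum]
    congr 1
    push_cast
    rw [Finset.sum_add_distrib, ← Finset.sum_mul]
  rw [key m, key n]
  rw [norm_mul, Complex.norm_exp_ofReal_mul_I, one_mul, norm_mul,
    Complex.norm_exp_ofReal_mul_I, one_mul]
  rw [Complex.sq_norm, Complex.sq_norm, Complex.normSq_add_mul_I, Complex.normSq_add_mul_I]
  set t : ℝ := Real.sqrt (((α : ℝ) - δ + 1) / ((α : ℝ) + δ + 1)) with htdef
  have hp : (0:ℝ) ≤ (α : ℝ) - δ + 1 := by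
    have : (δ:ℝ) ≤ (α:ℝ) := by exact_mod_cast hα
    linarith
  have hq : (0:ℝ) < (α : ℝ) + δ + 1 := by positivity
  have ht0 : 0 ≤ t := Real.sqrt_nonneg _
  have ht2 : t ^ 2 = ((α : ℝ) - δ + 1) / ((α : ℝ) + δ + 1) := by
    rw [htdef, Real.sq_sqrt (div_nonneg hp hq.le)]
  have hcomp : ∀ (x : ℝ), 0 ≤ x → ∀ j : ℕ,
      t * (x / ((α : ℝ) + j + 1)) ≤ x / ((α : ℝ) + (j + δ : ℕ) + 1) := by
    intro x hx j
    have hd1 : (0:ℝ) < (α : ℝ) + j + 1 := by positivity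
    have hd2' : ((α : ℝ) + (j + δ : ℕ) + 1) = (α : ℝ) + j + δ + 1 := by push_cast; ring
    rw [hd2']
    have hA : (0:ℝ) ≤ (α : ℝ) := Nat.cast_nonneg α
    have hD : (0:ℝ) ≤ (δ : ℝ) := Nat.cast_nonneg δ
    have hJ : (0:ℝ) ≤ (j : ℝ) := Nat.cast_nonneg j
    have hd2'' : (0:ℝ) < (α : ℝ) + j + δ + 1 := by positivity
    have hts : t ≤ ((α : ℝ) + j + 1) / ((α : ℝ) + j + δ + 1) := by
      have h1 : ((α : ℝ) - δ + 1) / ((α : ℝ) + δ + 1)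
          ≤ (((α : ℝ) + j + 1) / ((α : ℝ) + j + δ + 1)) ^ 2 := by
        rw [div_pow, div_le_div_iff₀ hq (by positivity)]
        nlinarith [mul_nonneg hD hJ, mul_nonneg (mul_nonneg hA hD) hJ,
          mul_nonneg (mul_nonneg hD hJ) hJ, mul_nonneg (mul_nonneg hA hD) hD,
          mul_nonneg hD hD, mul_nonneg (mul_nonneg hD hD) hD,
          mul_nonneg (mul_nonneg hD hD) hJ]
      calc t ≤ Real.sqrt ((((α : ℝ) + j + 1) / ((α : ℝ) + j + δ + 1)) ^ 2) :=
            Real.sqrt_le_sqrt h1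
        _ = ((α : ℝ) + j + 1) / ((α : ℝ) + j + δ + 1) := Real.sqrt_sq (by positivity)
    calc t * (x / ((α : ℝ) + j + 1))
        ≤ (((α : ℝ) + j + 1) / ((α : ℝ) + j + δ + 1)) * (x / ((α : ℝ) + j + 1)) :=
          mul_le_mul_of_nonneg_right hts (div_nonneg hx hd1.le)
      _ = x / ((α : ℝ) + j + δ + 1) := by field_simp
  have hsum : ∀ (f : Fin k → ℝ), (∀ l, 0 ≤ f l) →
      t * (∑ l : Fin k, f l / ((α : ℝ) + n l + 1))
        ≤ ∑ l : Fin k, f l / ((α : ℝ) + m l + 1) := by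
    intro f hf
    rw [Finset.mul_sum]
    refine Finset.sum_le_sum fun l _ => ?_
    rw [hm l]
    exact hcomp (f l) (hf l) (n l)
  have hXA := hsum X hX0
  have hYA := hsum Y hY0
  have hXB : 0 ≤ ∑ l : Fin k, X l / ((α : ℝ) + n l + 1) :=
    Finset.sum_nonneg fun l _ => div_nonneg (hX0 l) (by positivity)
  have hYB : 0 ≤ ∑ l : Fin k, Y l / ((α : ℝ) + n l + 1) :=
    Finset.sum_nonneg fun l _ => div_nonneg (hY0 l) (by positivity)
  rw [ge_iff_le, ← ht2]
  set XA := ∑ l : Fin k, X l / ((α : ℝ) + m l + 1) with hXAdef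
  set YA := ∑ l : Fin k, Y l / ((α : ℝ) + m l + 1) with hYAdef
  set XB := ∑ l : Fin k, X l / ((α : ℝ) + n l + 1) with hXBdef
  set YB := ∑ l : Fin k, Y l / ((α : ℝ) + n l + 1) with hYBdef
  have h1 : t * XB * (t * XB) ≤ XA * XA :=
    mul_le_mul hXA hXA (mul_nonneg ht0 hXB) (le_trans (mul_nonneg ht0 hXB) hXA)
  have h2 : t * YB * (t * YB) ≤ YA * YA :=
    mul_le_mul hYA hYA (mul_nonneg ht0 hYB) (le_trans (mul_nonneg ht0 hYB) hYA)
  nlinarith [h1, h2]
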